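/- Each of the 20 indices 1,...,20 appears an even number of times in the Kernaghan 4×11 measurement index table, while the number of measurements (11) is odd; hence the total number of incidences assigned truth value 1 under any assignment giving exactly one 1 per measurement is odd, contradicting its evenness. Formally: for any f: Fin 20 → Bool, ∑ over the 11 columns of (number of entries a in that column with f(a) = true) ≡ 0 (mod 2) whenever counted via index multiplicities, so it cannot equal 11. -/
import Mathlib


open Finset

/-- The 11 four-element Kernaghan measurements, as columns of indices into the 20 vectors
(0-based indexing). -/
def kernaghan : Fin 11 → Fin 4 → Fin 20 :=
  ![![0,1,2,3], ![0,1,4,5], ![0,2,7,9], ![0,3,13,14],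
    ![16,17,18,19], ![16,18,8,9], ![17,18,13,15], ![18,19,4,6],
    ![14,15,10,11], ![5,6,10,12], ![8,7,12,11]]

lemma kern_even : ∀ a : Fin 20,
    Even ((univ.filter (fun p : Fin 11 × Fin 4 => kernaghan p.1 p.2 = a)).card) := by
  decide

lemma kern_sum_eq (f : Fin 20 → Bool) :
    (∑ c : Fin 11, (univ.filter (fun r : Fin 4 => f (kernaghan c r) = true)).card)
      = ∑ a : Fin 20, ∑ p ∈ univ.filter (fun p : Fin 11 × Fin 4 => kernaghan p.1 p.2 = a),
          (if f (kernaghan p.1 p.2) = true then 1 else 0) := by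
  rw [Finset.sum_fiberwise]
  rw [Fintype.sum_prod_type]
  exact Finset.sum_congr rfl fun c _ => (Finset.card_filter _ _)

theorem stmt_16 :
    (∀ a : Fin 20,
      Even ((univ.filter (fun p : Fin 11 × Fin 4 => kernaghan p.1 p.2 = a)).card)) ∧
    ∀ f : Fin 20 → Bool,
      Even (∑ c : Fin 11, (univ.filter (fun r : Fin 4 => f (kernaghan c r) = true)).card) ∧
      (∑ c : Fin 11, (univ.filter (fun r : Fin 4 => f (kernaghan c r) = true)).card) ≠ 11 := by
  refine ⟨kern_even, fun f => ?_⟩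
  have hev : Even (∑ c : Fin 11,
      (univ.filter (fun r : Fin 4 => f (kernaghan c r) = true)).card) := by
    rw [kern_sum_eq f]
    refine Finset.even_sum _ fun a _ => ?_
    have : (∑ p ∈ univ.filter (fun p : Fin 11 × Fin 4 => kernaghan p.1 p.2 = a),
        (if f (kernaghan p.1 p.2) = true then 1 else 0))
        = if f a = true then (univ.filter (fun p : Fin 11 × Fin 4 => kernaghan p.1 p.2 = a)).card else 0 := by
      by_cases hfa : f a = true
      · simp only [hfa, if_true]
        rw [← Finset.card_filter]
        congr 1
        refine Finset.filter_true_of_mem fun p hp => ?_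
        rw [Finset.mem_filter] at hp
        rw [hp.2, hfa]
      · simp only [hfa, if_false]
        refine Finset.sum_eq_zero fun p hp => ?_
        rw [Finset.mem_filter] at hp
        rw [hp.2]
        simp [hfa]
    rw [this]
    split
    · exact kern_even a
    · exact Even.zero
  exact ⟨hev, fun h => by rw [h] at hev; exact (Nat.not_even_iff_odd.mpr (by decide)) hev⟩
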